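/- Let M and N be left A-modules with flat connections ∇_M (with ∇_M(m) = Σ m_A ⊗ m_M) and ∇_N (with ∇_N(n) = Σ n_A ⊗ n_N) with respect to the universal differential calculus. Define c̃_{M,N}: M⊗N → N⊗M by c̃_{M,N}(m⊗n) = n⊗m − Σ m_A n ⊗ m_M, and c̃_{N,M}: N⊗M → M⊗N by c̃_{N,M}(n⊗m) = m⊗n − Σ n_A m ⊗ n_N. Then c̃_{N,M}∘c̃_{M,N} is the identity up to balanced relations: for all m ∈ M, n ∈ N, the element c̃_{N,M}(c̃_{M,N}(m⊗n)) − m⊗n lies in the K-linear span of {(x b)⊗y − x⊗(b y) : x ∈ M, b ∈ A, y ∈ N} inside M⊗N (where x b is the induced right action x·b := b x − Σ x_A b x_M on M and b y the left action on N). -/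
import Mathlib


open TensorProduct

variable (K A M : Type*) [Field K] [Ring A] [Algebra K A]
  [AddCommGroup M] [Module K M] [Module A M] [IsScalarTower K A M]

/-- The action map `A ⊗ M → M`, `a ⊗ m ↦ a • m`. -/
noncomputable def actMap : A ⊗[K] M →ₗ[K] M :=
  TensorProduct.lift (LinearMap.mk₂ K (fun a m => a • m)
    (fun a b m => add_smul a b m)
    (fun k a m => smul_assoc k a m)
    (fun a m n => smul_add a m n)
    (fun k a m => (smul_comm k a m).symm))

/-- Left multiplication by `a : A` on a left `A`-module, as a `K`-linear map. -/
def lsmulMap (a : A) : M →ₗ[K] M where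
  toFun := fun m => a • m
  map_add' := fun x y => smul_add a x y
  map_smul' := fun k m => (smul_comm k a m).symm

/-- `a ↦ a • n` as a `K`-linear map `A → M`. -/
def smulBy (n : M) : A →ₗ[K] M where
  toFun := fun a => a • n
  map_add' := fun a b => add_smul a b n
  map_smul' := fun k a => smul_assoc k a n

/-- `D : M → A ⊗ M` is a connection with respect to the universal differential
calculus. -/
def IsConnection (D : M →ₗ[K] A ⊗[K] M) : Prop :=
  (∀ m : M, actMap K A M (D m) = 0) ∧
  ∀ (a : A) (m : M),
    D (a • m) = LinearMap.rTensor M (LinearMap.mulLeft K a) (D m)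
      + (1 : A) ⊗ₜ[K] (a • m) - a ⊗ₜ[K] m

/-- Flatness of a connection: `Σ 1 ⊗ m_A ⊗ m_M = Σ m_A ⊗ D(m_M)`. -/
def IsFlatConnection (D : M →ₗ[K] A ⊗[K] M) : Prop :=
  ∀ m : M, (1 : A) ⊗ₜ[K] (D m) = LinearMap.lTensor A D (D m)

/-- The induced right operation `m·a := a m − Σ m_A a m_M`. -/
noncomputable def rop (D : M →ₗ[K] A ⊗[K] M) (m : M) (a : A) : M :=
  a • m - actMap K A M (LinearMap.rTensor M (LinearMap.mulRight K a) (D m))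

variable (N : Type*) [AddCommGroup N] [Module K N] [Module A N] [IsScalarTower K A N]

/-- The map `N ⊗ A → N`, `n ⊗ a ↦ a • n`. -/
noncomputable def ract : N ⊗[K] A →ₗ[K] N :=
  TensorProduct.lift (LinearMap.mk₂ K (fun n a => a • n)
    (fun n₁ n₂ a => smul_add a n₁ n₂)
    (fun k n a => (smul_comm k a n).symm)
    (fun n a b => add_smul a b n)
    (fun k n a => smul_assoc k a n))

/-- The map `c̃ : M ⊗ N → N ⊗ M`, `m ⊗ n ↦ n ⊗ m − Σ (m_A • n) ⊗ m_M`, associated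
with a connection `D` on `M`. -/
noncomputable def ctMap (D : M →ₗ[K] A ⊗[K] M) : M ⊗[K] N →ₗ[K] N ⊗[K] M :=
  (LinearMap.id - (LinearMap.rTensor M (ract K A N)).comp
      (((TensorProduct.assoc K N A M).symm.toLinearMap).comp
        (LinearMap.lTensor N D))).comp
    (TensorProduct.comm K M N).toLinearMap

/-- For flat connections `DM` on `M` and `DN` on `N`, the composite
`c̃_{N,M} ∘ c̃_{M,N}` is the identity up to the balanced relations defining `M ⊗_A N`
(with the induced right action on `M`). -/
theorem ctMap_comp_ctMap_eq_id_up_to_balanced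
    (DM : M →ₗ[K] A ⊗[K] M) (hconnM : IsConnection K A M DM)
    (hflatM : IsFlatConnection K A M DM)
    (DN : N →ₗ[K] A ⊗[K] N) (hconnN : IsConnection K A N DN)
    (hflatN : IsFlatConnection K A N DN)
    (m : M) (n : N) :
    ctMap K A N M DN (ctMap K A M N DM (m ⊗ₜ[K] n)) - m ⊗ₜ[K] n
      ∈ Submodule.span K
          {z : M ⊗[K] N | ∃ (x : M) (b : A) (y : N),
            z = (rop K A M DM x b) ⊗ₜ[K] y - x ⊗ₜ[K] (b • y)} := by
  obtain ⟨s, hs⟩ := TensorProduct.exists_finset (DM m)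
  obtain ⟨t, ht⟩ := TensorProduct.exists_finset (DN n)
  have h0M : ∑ i ∈ s, i.1 • i.2 = (0 : M) := by
    have h := hconnM.1 m
    rw [hs, map_sum] at h
    simpa [actMap] using h
  have h0N : ∑ j ∈ t, j.1 • j.2 = (0 : N) := by
    have h := hconnN.1 n
    rw [ht, map_sum] at h
    simpa [actMap] using h
  have hrop : ∀ b : A, rop K A M DM m b = b • m - ∑ i ∈ s, (i.1 * b) • i.2 := by
    intro b
    rw [rop, hs, map_sum, map_sum]
    simp [actMap]
  have step1 : ctMap K A M N DM (m ⊗ₜ[K] n)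
      = n ⊗ₜ[K] m - ∑ i ∈ s, (i.1 • n) ⊗ₜ[K] i.2 := by
    simp [ctMap, hs, TensorProduct.tmul_sum, map_sum, ract]
  have step3 : ctMap K A N M DN (n ⊗ₜ[K] m)
      = m ⊗ₜ[K] n - ∑ j ∈ t, (j.1 • m) ⊗ₜ[K] j.2 := by
    simp [ctMap, ht, TensorProduct.tmul_sum, map_sum, ract]
  have step2 : ∀ (a : A) (x : M), ctMap K A N M DN ((a • n) ⊗ₜ[K] x)
      = (a • x) ⊗ₜ[K] n - ∑ j ∈ t, ((a * j.1) • x) ⊗ₜ[K] j.2 := by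
    intro a x
    have hDN : DN (a • n) = (∑ j ∈ t, (a * j.1) ⊗ₜ[K] j.2)
        + (1 : A) ⊗ₜ[K] (a • n) - a ⊗ₜ[K] n := by
      rw [hconnN.2 a n, ht, map_sum]
      simp
    simp only [ctMap, LinearMap.comp_apply, LinearEquiv.coe_coe, comm_tmul,
      LinearMap.sub_apply, LinearMap.id_apply, LinearMap.lTensor_tmul, hDN,
      TensorProduct.tmul_add, TensorProduct.tmul_sub, TensorProduct.tmul_sum,
      map_add, map_sub, map_sum, assoc_symm_tmul, LinearMap.rTensor_tmul]
    simp [ract]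
    abel
  have key : ctMap K A N M DN (ctMap K A M N DM (m ⊗ₜ[K] n)) - m ⊗ₜ[K] n
      = ∑ j ∈ t, -((rop K A M DM m j.1) ⊗ₜ[K] j.2 - m ⊗ₜ[K] (j.1 • j.2)) := by
    rw [step1, map_sub, map_sum, step3]
    simp only [step2]
    rw [Finset.sum_sub_distrib]
    rw [← TensorProduct.sum_tmul, h0M, TensorProduct.zero_tmul]
    have hmt : ∑ j ∈ t, m ⊗ₜ[K] (j.1 • j.2) = (0 : M ⊗[K] N) := by
      rw [← TensorProduct.tmul_sum, h0N, TensorProduct.tmul_zero]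
    have hsum : ∀ j : A × N, (∑ i ∈ s, ((i.1 * j.1) • i.2)) ⊗ₜ[K] j.2
        = ∑ i ∈ s, ((i.1 * j.1) • i.2) ⊗ₜ[K] j.2 := fun j => TensorProduct.sum_tmul _ _ _
    calc m ⊗ₜ[K] n - ∑ j ∈ t, (j.1 • m) ⊗ₜ[K] j.2 -
          (0 - ∑ i ∈ s, ∑ j ∈ t, ((i.1 * j.1) • i.2) ⊗ₜ[K] j.2) - m ⊗ₜ[K] n
        = - ∑ j ∈ t, (j.1 • m) ⊗ₜ[K] j.2
            + ∑ j ∈ t, ∑ i ∈ s, ((i.1 * j.1) • i.2) ⊗ₜ[K] j.2 := by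
          rw [Finset.sum_comm]; abel
      _ = ∑ j ∈ t, -((rop K A M DM m j.1) ⊗ₜ[K] j.2 - m ⊗ₜ[K] (j.1 • j.2)) := by
          rw [← sub_zero (∑ j ∈ t, -((rop K A M DM m j.1) ⊗ₜ[K] j.2 - m ⊗ₜ[K] (j.1 • j.2))),
            ← hmt]
          rw [← Finset.sum_neg_distrib, ← Finset.sum_sub_distrib, ← Finset.sum_add_distrib]
          refine Finset.sum_congr rfl fun j _ => ?_
          rw [hrop j.1, TensorProduct.sub_tmul, hsum j]
          abel
  rw [key]
  exact Submodule.sum_mem _ fun j _ =>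
    Submodule.neg_mem _ (Submodule.subset_span ⟨m, j.1, j.2, rfl⟩)
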